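/- Let 𝔭 ∈ 𝒪_F be a prime coprime to 3 and let k, l be nonnegative integers with k ≥ l and l ≡ 0 (mod 3). Then g₃(𝔭^k, 𝔭^l) = φ(𝔭^l) = #(𝒪_F/(𝔭^l))^×. Moreover, if l and k satisfy neither l = k + 1 nor (k ≥ l and 3 | l), then g₃(𝔭^k, 𝔭^l) = 0. -/

import Mathlib

open NumberField

/-- The cubic Gauss sum `g₃(r, n) = Σ_{x mod n} χ(x) e(Tr_F(rx/(δ_F n)))` in
`F = ℚ(ζ₁₂)`, where `χ` is the cubic residue symbol for the modulus `n` and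
`δ = δ_F = 2√3 i` is the different of `F`. -/
noncomputable def gaussSum3 (χ : 𝓞 (CyclotomicField 12 ℚ) → ℂ) (δ : CyclotomicField 12 ℚ)
    (r n : 𝓞 (CyclotomicField 12 ℚ)) : ℂ :=
  ∑ᶠ x : 𝓞 (CyclotomicField 12 ℚ) ⧸ Ideal.span {n},
    χ (Quotient.out x) * Complex.exp (2 * (Real.pi : ℂ) * Complex.I *
      ((Algebra.trace ℚ (CyclotomicField 12 ℚ)
        (((Quotient.out x : 𝓞 (CyclotomicField 12 ℚ)) : CyclotomicField 12 ℚ) * (r : CyclotomicField 12 ℚ)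
          / ((n : CyclotomicField 12 ℚ) * δ)) : ℚ) : ℂ))



open Polynomial

set_option synthInstance.maxHeartbeats 1000000
set_option maxHeartbeats 4000000
open NumberField Polynomial


local notation "F" => CyclotomicField 12 ℚ
local notation "O" => 𝓞 (CyclotomicField 12 ℚ)
local notation "K4" => CyclotomicField 4 ℚ
local notation "K3" => CyclotomicField 3 ℚ

instance : IsCyclotomicExtension {12} ℚ (CyclotomicField 12 ℚ) := CyclotomicField.isCyclotomicExtension 12 ℚ
instance : IsCyclotomicExtension {4} ℚ (CyclotomicField 4 ℚ) := CyclotomicField.isCyclotomicExtension 4 ℚ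
instance : IsCyclotomicExtension {3} ℚ (CyclotomicField 3 ℚ) := CyclotomicField.isCyclotomicExtension 3 ℚ

instance : NumberField (CyclotomicField 12 ℚ) := IsCyclotomicExtension.numberField {12} ℚ _

lemma hzF {ζ : O} (hζ : IsPrimitiveRoot ζ 12) : IsPrimitiveRoot (ζ : F) 12 :=
  hζ.map_of_injective RingOfIntegers.coe_injective

lemma zpow12 {ζ : O} (hζ : IsPrimitiveRoot ζ 12) : (ζ : F) ^ 12 = 1 := (hzF hζ).pow_eq_one

lemma zpow6 {ζ : O} (hζ : IsPrimitiveRoot ζ 12) : (ζ : F) ^ 6 = -1 := by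
  have h2 : ((ζ : F) ^ 6 - 1) * ((ζ : F) ^ 6 + 1) = 0 := by
    have := zpow12 hζ; linear_combination this
  rcases mul_eq_zero.mp h2 with h | h
  · exact absurd (by linear_combination h)
      ((hzF hζ).pow_ne_one_of_pos_of_lt (by norm_num) (by norm_num) : (ζ:F)^6 ≠ 1)
  · linear_combination h

lemma zrel4 {ζ : O} (hζ : IsPrimitiveRoot ζ 12) : (ζ : F) ^ 4 = (ζ : F) ^ 2 - 1 := by
  have h6 : (ζ : F) ^ 6 = -1 := zpow6 hζ
  have h4 : (ζ : F) ^ 4 ≠ 1 := (hzF hζ).pow_ne_one_of_pos_of_lt (by norm_num) (by norm_num)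
  have hfac : ((ζ : F) ^ 2 + 1) * ((ζ : F) ^ 4 - (ζ : F) ^ 2 + 1) = 0 := by
    linear_combination h6
  rcases mul_eq_zero.mp hfac with h | h
  · exact absurd (by linear_combination ((ζ:F)^2 - 1) * h) h4
  · linear_combination h

lemma opow12 {ζ : O} (hζ : IsPrimitiveRoot ζ 12) : ζ ^ 12 = 1 := hζ.pow_eq_one

lemma orel4 {ζ : O} (hζ : IsPrimitiveRoot ζ 12) : ζ ^ 4 = ζ ^ 2 - 1 :=
  RingOfIntegers.coe_injective (by push_cast [zrel4 hζ]; ring)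

/-- `d = 4ζ² - 2` is (a generator of) the different. -/
noncomputable def dO (ζ : O) : O := 4 * ζ ^ 2 - 2

lemma d_eq_delta {ζ : O} (hζ : IsPrimitiveRoot ζ 12) :
    ((dO ζ : O) : F) = 2 * ((ζ : F) + (ζ : F) ^ 11) * (ζ : F) ^ 3 := by
  have h12 := zpow12 hζ
  have h4 := zrel4 hζ
  show ((4 * ζ ^ 2 - 2 : O) : F) = _
  push_cast [map_ofNat]
  linear_combination (-2 : CyclotomicField 12 ℚ) * h4 + (-2 * (ζ:F)^2) * h12

lemma d_sq {ζ : O} (hζ : IsPrimitiveRoot ζ 12) : (dO ζ) ^ 2 = -12 := by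
  have h4 := orel4 hζ
  show (4 * ζ ^ 2 - 2 : O) ^ 2 = -12
  linear_combination 16 * h4

lemma dF_ne_zero {ζ : O} (hζ : IsPrimitiveRoot ζ 12) : ((dO ζ : O) : F) ≠ 0 := by
  have hne : dO ζ ≠ 0 := by
    intro h0
    have := d_sq hζ
    rw [h0] at this
    norm_num at this
  simpa using (map_ne_zero_iff _ RingOfIntegers.coe_injective).mpr hne

/-- `s = 2ζ² - 1 = √-3`. -/
noncomputable def sO (ζ : O) : O := 2 * ζ ^ 2 - 1

lemma d_eq_two_s (ζ : O) : dO ζ = 2 * sO ζ := by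
  show (4 * ζ ^ 2 - 2 : O) = 2 * (2 * ζ ^ 2 - 1); ring

section tower

instance : NumberField (CyclotomicField 4 ℚ) := IsCyclotomicExtension.numberField {4} ℚ _
instance : NumberField (CyclotomicField 3 ℚ) := IsCyclotomicExtension.numberField {3} ℚ _

lemma quad_repr4 {K : Type*} [CommRing K] {η : K} (hη : η ^ 2 = -1) {w : K}
    (hw : w ∈ Algebra.adjoin ℤ {η}) : ∃ a b : ℤ, w = (a : K) + (b : K) * η := by
  refine Algebra.adjoin_induction (fun x hx => ?_) (fun r => ?_) ?_ ?_ hw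
  · rcases hx with rfl; exact ⟨0, 1, by push_cast; ring⟩
  · exact ⟨r, 0, by push_cast [algebraMap_int_eq, eq_intCast]; ring⟩
  · rintro x y - - ⟨a, b, rfl⟩ ⟨c, d, rfl⟩; exact ⟨a + c, b + d, by push_cast; ring⟩
  · rintro x y - - ⟨a, b, rfl⟩ ⟨c, d, rfl⟩
    exact ⟨a * c - b * d, a * d + b * c, by push_cast; linear_combination (b:K) * (d:K) * hη⟩

lemma quad_repr3 {K : Type*} [CommRing K] {η : K} (hη : η ^ 2 = -1 - η) {w : K}
    (hw : w ∈ Algebra.adjoin ℤ {η}) : ∃ a b : ℤ, w = (a : K) + (b : K) * η := by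
  refine Algebra.adjoin_induction (fun x hx => ?_) (fun r => ?_) ?_ ?_ hw
  · rcases hx with rfl; exact ⟨0, 1, by push_cast; ring⟩
  · exact ⟨r, 0, by push_cast [algebraMap_int_eq, eq_intCast]; ring⟩
  · rintro x y - - ⟨a, b, rfl⟩ ⟨c, d, rfl⟩; exact ⟨a + c, b + d, by push_cast; ring⟩
  · rintro x y - - ⟨a, b, rfl⟩ ⟨c, d, rfl⟩
    exact ⟨a * c - b * d, a * d + b * c - b * d, by push_cast; linear_combination (b:K) * (d:K) * hη⟩

/-- Trace from `K4 = ℚ(i)` of `a + b·i` is `2a`. -/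
lemma trace_K4 (a b : ℤ) :
    Algebra.trace ℚ (CyclotomicField 4 ℚ) ((a : K4) + (b : K4) * IsCyclotomicExtension.zeta 4 ℚ K4)
      = 2 * a := by
  have hη := IsCyclotomicExtension.zeta_spec 4 ℚ K4
  set η := IsCyclotomicExtension.zeta 4 ℚ K4
  have hfr : Module.finrank ℚ K4 = 2 := by
    rw [IsCyclotomicExtension.finrank (n := 4) K4 (Polynomial.cyclotomic.irreducible_rat (by norm_num))]
    decide
  have hmin : minpoly ℚ η = Polynomial.cyclotomic 4 ℚ :=
    (Polynomial.cyclotomic_eq_minpoly_rat hη (by norm_num)).symm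
  have hcyc4 : Polynomial.cyclotomic 4 ℚ = Polynomial.X ^ 2 + 1 := by
    have : (4 : ℕ) = 2 ^ (1 + 1) := by norm_num
    rw [this, Polynomial.cyclotomic_prime_pow_eq_geom_sum (by norm_num)]
    simp [Finset.sum_range_succ]
    ring
  have htrη : Algebra.trace ℚ K4 η = 0 := by
    have pb := hη.powerBasis ℚ
    have := PowerBasis.trace_gen_eq_nextCoeff_minpoly (hη.powerBasis ℚ)
    rw [hη.powerBasis_gen ℚ] at this
    rw [this, hmin, hcyc4]
    have : (Polynomial.X ^ 2 + 1 : Polynomial ℚ).nextCoeff = 0 := by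
      have hdeg : (Polynomial.X ^ 2 + 1 : Polynomial ℚ).natDegree = 2 := by
        compute_degree!
      rw [Polynomial.nextCoeff, hdeg]
      norm_num [Polynomial.coeff_X_pow, Polynomial.coeff_one]
    rw [this, neg_zero]
  have h1 : ((a : ℚ) : K4) = algebraMap ℚ K4 (a : ℚ) := by simp
  rw [show ((a : K4) + (b : K4) * η) = algebraMap ℚ K4 (a : ℚ) + (b : ℚ) • η by
    push_cast; erw [Algebra.smul_def]; simp]
  rw [map_add, Algebra.trace_algebraMap]; erw [LinearMap.map_smul]; rw [htrη, hfr]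
  simp only [smul_zero, add_zero, nsmul_eq_mul]
  push_cast
  ring

/-- Trace from `K3 = ℚ(ω)` of `a + b·ω` is `2a - b`. -/
lemma trace_K3 (a b : ℤ) :
    Algebra.trace ℚ (CyclotomicField 3 ℚ) ((a : K3) + (b : K3) * IsCyclotomicExtension.zeta 3 ℚ K3)
      = 2 * a - b := by
  have hη := IsCyclotomicExtension.zeta_spec 3 ℚ K3
  set η := IsCyclotomicExtension.zeta 3 ℚ K3
  have hfr : Module.finrank ℚ K3 = 2 := by
    rw [IsCyclotomicExtension.finrank (n := 3) K3 (Polynomial.cyclotomic.irreducible_rat (by norm_num))]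
    decide
  have hmin : minpoly ℚ η = Polynomial.cyclotomic 3 ℚ :=
    (Polynomial.cyclotomic_eq_minpoly_rat hη (by norm_num)).symm
  have hcyc3 : Polynomial.cyclotomic 3 ℚ = Polynomial.X ^ 2 + Polynomial.X + 1 := by
    rw [Polynomial.cyclotomic_prime ℚ 3]
    simp [Finset.sum_range_succ]
    ring
  have htrη : Algebra.trace ℚ K3 η = -1 := by
    have := PowerBasis.trace_gen_eq_nextCoeff_minpoly (hη.powerBasis ℚ)
    rw [hη.powerBasis_gen ℚ] at this
    rw [this, hmin, hcyc3]
    have h2 : (Polynomial.X ^ 2 + Polynomial.X + 1 : Polynomial ℚ).nextCoeff = 1 := by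
      have hdeg : (Polynomial.X ^ 2 + Polynomial.X + 1 : Polynomial ℚ).natDegree = 2 := by
        compute_degree!
      rw [Polynomial.nextCoeff, hdeg]
      norm_num [Polynomial.coeff_X_pow, Polynomial.coeff_one]
    rw [h2]
  rw [show ((a : K3) + (b : K3) * η) = algebraMap ℚ K3 (a : ℚ) + (b : ℚ) • η by
    push_cast; erw [Algebra.smul_def]; simp]
  rw [map_add, Algebra.trace_algebraMap]; erw [LinearMap.map_smul]; rw [htrη, hfr]
  simp only [smul_eq_mul, nsmul_eq_mul]
  push_cast
  ring

end tower

section embed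

open Polynomial

lemma sq_prim4 {K : Type*} [Field K] {η : K} (h : IsPrimitiveRoot η 4) : η ^ 2 = -1 := by
  have h2 : (η ^ 2 - 1) * (η ^ 2 + 1) = 0 := by
    have := h.pow_eq_one; linear_combination this
  rcases mul_eq_zero.mp h2 with h' | h'
  · exact absurd (by linear_combination h')
      (h.pow_ne_one_of_pos_of_lt (by norm_num) (by norm_num) : η ^ 2 ≠ 1)
  · linear_combination h'

lemma sq_prim3 {K : Type*} [Field K] {η : K} (h : IsPrimitiveRoot η 3) : η ^ 2 = -1 - η := by
  have h2 : (η - 1) * (η ^ 2 + η + 1) = 0 := by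
    have := h.pow_eq_one; linear_combination this
  rcases mul_eq_zero.mp h2 with h' | h'
  · exact absurd (by linear_combination h')
      (h.pow_ne_one_of_pos_of_lt (by norm_num) (by norm_num) : η ^ 1 ≠ 1)
  · linear_combination h'

lemma trace_even (y : F) (hy : IsIntegral ℤ y) :
    ∃ m : ℤ, Algebra.trace ℚ (CyclotomicField 12 ℚ) y = 2 * m := by
  classical
  have hz12 : IsPrimitiveRoot (IsCyclotomicExtension.zeta 12 ℚ F) 12 :=
    IsCyclotomicExtension.zeta_spec 12 ℚ F
  have hz4 : IsPrimitiveRoot ((IsCyclotomicExtension.zeta 12 ℚ F) ^ 3) 4 :=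
    hz12.pow (by norm_num) (by norm_num)
  have hη := IsCyclotomicExtension.zeta_spec 4 ℚ K4
  set η := IsCyclotomicExtension.zeta 4 ℚ K4 with hηdef
  have hmin : minpoly ℚ η = cyclotomic 4 ℚ := (cyclotomic_eq_minpoly_rat hη (by norm_num)).symm
  have haev : aeval ((IsCyclotomicExtension.zeta 12 ℚ F) ^ 3) (minpoly ℚ ((hη.powerBasis ℚ).gen)) = 0 := by
    rw [hη.powerBasis_gen ℚ, hmin, Polynomial.aeval_def, ← Polynomial.eval_map, map_cyclotomic]
    exact hz4.isRoot_cyclotomic (by norm_num)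
  set φ : K4 →ₐ[ℚ] F := (hη.powerBasis ℚ).lift _ haev with hφ
  letI : Algebra K4 F := φ.toRingHom.toAlgebra
  haveI : IsScalarTower ℚ K4 F := IsScalarTower.of_algebraMap_eq fun x => (φ.commutes x).symm
  haveI : IsScalarTower ℤ K4 F := IsScalarTower.of_algebraMap_eq fun x => by
    have : algebraMap K4 F = φ.toRingHom := rfl
    simp only [this, algebraMap_int_eq, eq_intCast, map_intCast]
  haveI : FiniteDimensional K4 F := FiniteDimensional.right ℚ K4 F
  set w := Algebra.trace K4 F y with hw
  have hwint : IsIntegral ℤ w := Algebra.isIntegral_trace hy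
  haveI : IsCyclotomicExtension {(2:ℕ) ^ 2} ℚ K4 := by
    have h : ((2:ℕ) ^ 2) = 4 := by norm_num
    rw [h]; infer_instance
  haveI := IsCyclotomicExtension.Rat.isIntegralClosure_adjoin_singleton_of_prime_pow
      (p := 2) (k := 2) (K := K4) (ζ := η) (by rw [show ((2:ℕ)^2) = 4 from by norm_num]; exact hη)
  obtain ⟨t, ht⟩ := this.isIntegral_iff.mp hwint
  obtain ⟨a, b, hab⟩ := quad_repr4 (sq_prim4 hη) t.2
  refine ⟨a, ?_⟩
  have htr : Algebra.trace ℚ F y = Algebra.trace ℚ K4 w := (Algebra.trace_trace y).symm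
  have hwt : w = (a : K4) + (b : K4) * η := by
    rw [← ht]; exact_mod_cast hab
  rw [htr, hwt, trace_K4]

lemma trace_s {ζ : O} (hζ : IsPrimitiveRoot ζ 12) (y : F) (hy : IsIntegral ℤ y) :
    ∃ m : ℤ, Algebra.trace ℚ (CyclotomicField 12 ℚ) (((sO ζ : O) : F) * y) = 3 * m := by
  classical
  have hz3 : IsPrimitiveRoot ((ζ : F) ^ 4) 3 := (hzF hζ).pow (by norm_num) (by norm_num)
  have hη := IsCyclotomicExtension.zeta_spec 3 ℚ K3
  set η := IsCyclotomicExtension.zeta 3 ℚ K3 with hηdef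
  have hmin : minpoly ℚ η = cyclotomic 3 ℚ := (cyclotomic_eq_minpoly_rat hη (by norm_num)).symm
  have haev : aeval ((ζ : F) ^ 4) (minpoly ℚ ((hη.powerBasis ℚ).gen)) = 0 := by
    rw [hη.powerBasis_gen ℚ, hmin, Polynomial.aeval_def, ← Polynomial.eval_map, map_cyclotomic]
    exact hz3.isRoot_cyclotomic (by norm_num)
  set φ : K3 →ₐ[ℚ] F := (hη.powerBasis ℚ).lift _ haev with hφ
  letI : Algebra K3 F := φ.toRingHom.toAlgebra
  haveI : IsScalarTower ℚ K3 F := IsScalarTower.of_algebraMap_eq fun x => (φ.commutes x).symm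
  haveI : IsScalarTower ℤ K3 F := IsScalarTower.of_algebraMap_eq fun x => by
    have : algebraMap K3 F = φ.toRingHom := rfl
    simp only [this, algebraMap_int_eq, eq_intCast, map_intCast]
  haveI : FiniteDimensional K3 F := FiniteDimensional.right ℚ K3 F
  have hφη : algebraMap K3 F η = (ζ : F) ^ 4 := by
    have : algebraMap K3 F = φ.toRingHom := rfl
    rw [this]
    have := (hη.powerBasis ℚ).lift_gen _ haev
    rwa [hη.powerBasis_gen ℚ] at this
  have hs : ((sO ζ : O) : F) = algebraMap K3 F (1 + 2 * η) := by
    rw [map_add, map_mul, map_one, hφη]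
    have h4 := zrel4 hζ
    show ((2 * ζ ^ 2 - 1 : O) : F) = _
    push_cast [map_ofNat]
    linear_combination (-2 : CyclotomicField 12 ℚ) * h4
  set w := Algebra.trace K3 F y with hw
  have hwint : IsIntegral ℤ w := Algebra.isIntegral_trace hy
  haveI := IsCyclotomicExtension.Rat.isIntegralClosure_adjoin_singleton_of_prime
      (p := 3) (K := K3) (ζ := η) hη
  obtain ⟨t, ht⟩ := this.isIntegral_iff.mp hwint
  obtain ⟨a, b, hab⟩ := quad_repr3 (sq_prim3 hη) t.2
  have hwt : w = (a : K3) + (b : K3) * η := by rw [← ht]; exact_mod_cast hab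
  refine ⟨-b, ?_⟩
  have htr : Algebra.trace ℚ F (((sO ζ : O) : F) * y)
      = Algebra.trace ℚ K3 (Algebra.trace K3 F (((sO ζ : O) : F) * y)) :=
    (Algebra.trace_trace _).symm
  have hpull : Algebra.trace K3 F (((sO ζ : O) : F) * y) = (1 + 2 * η) * w := by
    rw [hs, ← Algebra.smul_def, LinearMap.map_smul, hw, Algebra.smul_def]
    simp
  rw [htr, hpull, hwt]
  have hη2 : η ^ 2 = -1 - η := sq_prim3 hη
  have : (1 + 2 * η) * ((a : K3) + (b : K3) * η)
      = ((a - 2*b : ℤ) : K3) + ((2*a - b : ℤ) : K3) * η := by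
    push_cast
    linear_combination (2 * (b:K3)) * hη2
  rw [this, trace_K3]
  push_cast; ring

end embed

section different

open Polynomial

lemma zeta_isIntegral {ζ : O} (hζ : IsPrimitiveRoot ζ 12) : IsIntegral ℤ ζ :=
  RingOfIntegers.isIntegral ζ

lemma minpoly_zeta {ζ : O} (hζ : IsPrimitiveRoot ζ 12) :
    minpoly ℤ ζ = X ^ 4 - X ^ 2 + 1 := by
  have hint : IsIntegral ℤ ζ := zeta_isIntegral hζ
  have h4 := orel4 hζ
  have haev : aeval ζ (X ^ 4 - X ^ 2 + 1 : ℤ[X]) = 0 := by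
    simp only [map_add, map_sub, map_pow, aeval_X, map_one]
    linear_combination h4
  have hdvd : minpoly ℤ ζ ∣ (X ^ 4 - X ^ 2 + 1 : ℤ[X]) :=
    minpoly.isIntegrallyClosed_dvd hint haev
  have hdeg : (minpoly ℤ ζ).natDegree = 4 := by
    have hmq : minpoly ℚ ((ζ : F)) = (minpoly ℤ ζ).map (algebraMap ℤ ℚ) :=
      minpoly.isIntegrallyClosed_eq_field_fractions ℚ (CyclotomicField 12 ℚ) hint
    have hcyc : cyclotomic 12 ℚ = minpoly ℚ ((ζ : F)) :=
      cyclotomic_eq_minpoly_rat (hzF hζ) (by norm_num)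
    have : (cyclotomic 12 ℚ).natDegree = 4 := by
      rw [natDegree_cyclotomic]; decide
    rw [hcyc, hmq, natDegree_map_eq_of_injective
      (algebraMap ℤ ℚ).injective_int] at this
    exact this
  have hg4 : (X ^ 4 - X ^ 2 + 1 : ℤ[X]).natDegree = 4 := by compute_degree!
  obtain ⟨q, hq⟩ := hdvd
  have hfm : (minpoly ℤ ζ).Monic := minpoly.monic hint
  have hfne : minpoly ℤ ζ ≠ 0 := hfm.ne_zero
  have hgne : (X ^ 4 - X ^ 2 + 1 : ℤ[X]) ≠ 0 := by
    intro h; rw [h] at hg4; simp at hg4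
  have hqne : q ≠ 0 := by rintro rfl; rw [mul_zero] at hq; exact hgne hq
  have hdq : q.natDegree = 0 := by
    have := congrArg Polynomial.natDegree hq
    rw [natDegree_mul hfne hqne, hg4, hdeg] at this
    omega
  have hqc : q = C (q.coeff 0) := Polynomial.eq_C_of_natDegree_eq_zero hdq
  have hlc : q.coeff 0 = 1 := by
    have := congrArg Polynomial.leadingCoeff hq
    rw [Polynomial.leadingCoeff_mul, hfm.leadingCoeff] at this
    have hglc : (X ^ 4 - X ^ 2 + 1 : ℤ[X]).leadingCoeff = 1 := by
      rw [Polynomial.leadingCoeff, hg4]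
      simp [Polynomial.coeff_one, Polynomial.coeff_X_pow]
    rw [hglc] at this
    rw [hqc]
    simp only [Polynomial.leadingCoeff, hdq] at this
    rw [Polynomial.coeff_C]
    simpa using this.symm
  rw [hqc, hlc, map_one, mul_one] at hq
  exact hq.symm

lemma d_mem_different {ζ : O} (hζ : IsPrimitiveRoot ζ 12) :
    dO ζ ∈ differentIdeal ℤ (𝓞 (CyclotomicField 12 ℚ)) := by
  have hadj : Algebra.adjoin ℚ {(algebraMap O F ζ)} = ⊤ := by
    have := IsCyclotomicExtension.adjoin_primitive_root_eq_top (n := 12) (A := ℚ) (hzF hζ)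
    exact this
  have hmem := aeval_derivative_mem_differentIdeal ℤ ℚ (CyclotomicField 12 ℚ) ζ hadj
  have hder : aeval ζ (derivative (minpoly ℤ ζ)) = 4 * ζ ^ 3 - 2 * ζ := by
    rw [minpoly_zeta hζ]
    simp only [derivative_add, derivative_sub, derivative_one, derivative_X_pow]
    push_cast
    simp only [map_add, map_sub, map_mul, map_pow, aeval_X, map_zero]
    simp [map_ofNat]
  have hd : dO ζ = ζ ^ 11 * (4 * ζ ^ 3 - 2 * ζ) := by
    have h12 := opow12 hζ
    show (4 * ζ ^ 2 - 2 : O) = _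
    linear_combination (-4 * ζ ^ 2 + 2 : O) * h12
  rw [hd, ← hder]
  exact Ideal.mul_mem_left _ _ hmem

/-- Key integrality: for every `w : O`, `Tr(w / d) ∈ ℤ`. -/
lemma trace_div_d {ζ : O} (hζ : IsPrimitiveRoot ζ 12) (w : O) :
    ∃ m : ℤ, Algebra.trace ℚ (CyclotomicField 12 ℚ) ((w : F) / ((dO ζ : O) : F)) = m := by
  obtain ⟨m2, h2⟩ := trace_even ((w * sO ζ : O) : F) (RingOfIntegers.isIntegral_coe _)
  obtain ⟨m3, h3⟩ := trace_s hζ ((w : O) : F) (RingOfIntegers.isIntegral_coe _)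
  have hsw : ((w * sO ζ : O) : F) = ((sO ζ : O) : F) * ((w : O) : F) := by push_cast; ring
  have heq : (2 * m2 : ℤ) = 3 * m3 := by
    have : (2 * (m2:ℚ) : ℚ) = 3 * (m3:ℚ) := by rw [← h2, ← h3, hsw]
    exact_mod_cast this
  obtain ⟨m, hm⟩ : (2:ℤ) ∣ m3 := by omega
  refine ⟨-m, ?_⟩
  have hdne := dF_ne_zero hζ
  have hd2 : ((dO ζ : O) : F) ^ 2 = -12 := by
    have := congrArg (fun t : O => (t : F)) (d_sq hζ)
    push_cast [map_ofNat] at this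
    exact_mod_cast this
  have key : (w : F) / ((dO ζ : O) : F)
      = (-(1/12) : ℚ) • ((w : F) * ((dO ζ : O) : F)) := by
    erw [Algebra.smul_def]; rw [div_eq_iff hdne]
    have : algebraMap ℚ F (-(1/12)) = -(1/12 : F) := by
      rw [map_neg, map_div₀, map_one, map_ofNat]
    rw [this]
    field_simp
    linear_combination (w : F) * hd2
  have htwd : ((w : O) : F) * ((dO ζ : O) : F) = 2 * (((w * sO ζ : O) : O) : F) := by
    push_cast [d_eq_two_s, map_ofNat]; ring
  rw [key]; erw [LinearMap.map_smul]; rw [htwd]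
  have h2tr : Algebra.trace ℚ (CyclotomicField 12 ℚ) (2 * (((w * sO ζ : O) : O) : F))
      = 2 * Algebra.trace ℚ (CyclotomicField 12 ℚ) (((w * sO ζ : O) : O) : F) := by
    rw [show (2 : F) * (((w * sO ζ : O) : O) : F) = (2:ℚ) • (((w * sO ζ : O) : O) : F) by
      erw [Algebra.smul_def]; norm_num]
    erw [LinearMap.map_smul]; norm_num
  rw [h2tr, h2]
  have : (m2 : ℚ) = 3 * m := by
    have : (2 * m2 : ℤ) = 3 * (2 * m) := by rw [heq, hm]
    have h' : (m2 : ℤ) = 3 * m := by omega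
    exact_mod_cast h'
  rw [this]
  simp only [smul_eq_mul]
  push_cast
  ring

/-- Key non-integrality: some `z : O` has `Tr(z / (𝔭 d)) ∉ ℤ`. -/
lemma exists_trace_nonint {ζ : O} (hζ : IsPrimitiveRoot ζ 12) {𝔭 : O} (hp : Prime 𝔭) :
    ∃ z : O, ∀ m : ℤ, Algebra.trace ℚ (CyclotomicField 12 ℚ)
      ((z : F) / (((𝔭 : O) : F) * ((dO ζ : O) : F))) ≠ m := by
  by_contra hcon
  push_neg at hcon
  have hpF : ((𝔭 : O) : F) ≠ 0 :=
    (map_ne_zero_iff _ RingOfIntegers.coe_injective).mpr hp.ne_zero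
  have hdF := dF_ne_zero hζ
  set t : F := (((𝔭 : O) : F) * ((dO ζ : O) : F))⁻¹ with htdef
  have ht : t ∈ Submodule.traceDual ℤ ℚ (1 : Submodule (𝓞 (CyclotomicField 12 ℚ)) (CyclotomicField 12 ℚ)) := by
    rw [Submodule.mem_traceDual]
    intro a ha
    rw [Submodule.one_eq_range] at ha
    obtain ⟨z, rfl⟩ := ha
    obtain ⟨m, hm⟩ := hcon z
    refine ⟨m, ?_⟩
    rw [Algebra.traceForm_apply, eq_intCast]
    rw [div_eq_mul_inv] at hm
    rw [mul_comm]
    exact hm.symm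
  have hdmem : ((dO ζ : O) : F) ∈ IsLocalization.coeSubmodule (CyclotomicField 12 ℚ)
      (differentIdeal ℤ (𝓞 (CyclotomicField 12 ℚ))) :=
    Submodule.mem_map.mpr ⟨dO ζ, d_mem_different hζ, rfl⟩
  rw [coeSubmodule_differentIdeal ℤ ℚ] at hdmem
  have hmul := Submodule.mem_div_iff_forall_mul_mem.mp hdmem t ht
  have hdt : ((dO ζ : O) : F) * t = (((𝔭 : O) : F))⁻¹ := by
    rw [htdef, mul_inv]
    field_simp
  rw [hdt] at hmul
  rw [Submodule.one_eq_range] at hmul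
  obtain ⟨u, hu⟩ := hmul
  have hu' : ((u : O) : F) = (((𝔭 : O) : F))⁻¹ := hu
  have h1 : ((u * 𝔭 : O) : F) = 1 := by
    have hmm : ((u * 𝔭 : O) : F) = ((u : O) : F) * ((𝔭 : O) : F) :=
      map_mul (algebraMap (𝓞 (CyclotomicField 12 ℚ)) (CyclotomicField 12 ℚ)) u 𝔭
    rw [hmm, hu']
    exact inv_mul_cancel₀ hpF
  have h2 : u * 𝔭 = 1 := RingOfIntegers.coe_injective (by simpa using h1)
  exact hp.not_unit (IsUnit.of_mul_eq_one _ (by rwa [mul_comm] at h2))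

end different

section quot

variable {𝔭 : O}

lemma mk_out {I : Ideal O} (x : O ⧸ I) : Ideal.Quotient.mk I (Quotient.out x) = x :=
  Quotient.out_eq' x

lemma dvd_sub_out {l : ℕ} {x : O ⧸ Ideal.span {𝔭 ^ l}} {y : O}
    (h : Ideal.Quotient.mk (Ideal.span {𝔭 ^ l}) y = x) :
    𝔭 ^ l ∣ (Quotient.out x - y) := by
  rw [← Ideal.mem_span_singleton, ← Ideal.Quotient.eq_zero_iff_mem, map_sub, mk_out, h, sub_self]

lemma sup_eq_top (hp : Prime 𝔭) {y : O} (hy : ¬ 𝔭 ∣ y) (l : ℕ) :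
    Ideal.span {y} ⊔ Ideal.span {𝔭 ^ l} = ⊤ := by
  by_contra h
  obtain ⟨M, hM, hle⟩ := Ideal.exists_le_maximal _ h
  have hyM : y ∈ M := hle (Ideal.mem_sup_left (Ideal.mem_span_singleton_self _))
  have hpM : 𝔭 ∈ M :=
    hM.isPrime.mem_of_pow_mem l (hle (Ideal.mem_sup_right (Ideal.mem_span_singleton_self _)))
  have hprime : (Ideal.span {𝔭}).IsPrime := (Ideal.span_singleton_prime hp.ne_zero).mpr hp
  have hmax : (Ideal.span {𝔭}).IsMaximal :=
    Ring.DimensionLEOne.maximalOfPrime (by simp [Ideal.span_singleton_eq_bot, hp.ne_zero]) hprime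
  have hPM : Ideal.span {𝔭} ≤ M := (Ideal.span_singleton_le_iff_mem _).mpr hpM
  have heq : Ideal.span {𝔭} = M := hmax.eq_of_le hM.ne_top hPM
  exact hy (Ideal.mem_span_singleton.mp (heq ▸ hyM))

lemma isUnit_mk (hp : Prime 𝔭) {y : O} (hy : ¬ 𝔭 ∣ y) (l : ℕ) :
    IsUnit (Ideal.Quotient.mk (Ideal.span {𝔭 ^ l}) y) := by
  have h := sup_eq_top hp hy l
  have h1 : (1 : O) ∈ Ideal.span {y} ⊔ Ideal.span {𝔭 ^ l} := h ▸ Submodule.mem_top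
  obtain ⟨a, ha, b, hb, hab⟩ := Submodule.mem_sup.mp h1
  obtain ⟨c, rfl⟩ := Ideal.mem_span_singleton'.mp ha
  refine IsUnit.of_mul_eq_one (Ideal.Quotient.mk _ c) ?_
  have hb0 : Ideal.Quotient.mk (Ideal.span {𝔭 ^ l}) b = 0 := Ideal.Quotient.eq_zero_iff_mem.mpr hb
  have : Ideal.Quotient.mk (Ideal.span {𝔭 ^ l}) (c * y + b) = 1 := by rw [hab, map_one]
  rw [map_add, hb0, add_zero, map_mul] at this
  rw [mul_comm] at this
  exact this

lemma isUnit_iff_not_dvd (hp : Prime 𝔭) {l : ℕ} (hl : l ≠ 0)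
    (x : O ⧸ Ideal.span {𝔭 ^ l}) : IsUnit x ↔ ¬ 𝔭 ∣ Quotient.out x := by
  constructor
  · intro hx hdvd
    obtain ⟨c, hc⟩ := hdvd
    have hx0 : x ^ l = (0 : O ⧸ Ideal.span {𝔭 ^ l}) := by
      rw [← mk_out x, ← map_pow, hc, Ideal.Quotient.eq_zero_iff_mem, mul_pow]
      exact Ideal.mul_mem_right _ _ (Ideal.mem_span_singleton_self _)
    haveI : Nontrivial (O ⧸ Ideal.span {𝔭 ^ l}) := by
      apply Ideal.Quotient.nontrivial_iff.mpr
      rw [Ne, Ideal.span_singleton_eq_top]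
      intro hu
      exact hp.not_unit ((isUnit_pow_iff hl).mp hu)
    have h0 : IsUnit ((0 : O ⧸ Ideal.span {𝔭 ^ l})) := hx0 ▸ hx.pow l
    rw [isUnit_zero_iff] at h0
    exact zero_ne_one h0
  · intro h
    have := isUnit_mk hp h l
    rwa [mk_out] at this

open scoped Classical in
lemma card_units_eq {R : Type*} [CommRing R] [Fintype R] :
    ((Nat.card Rˣ : ℕ) : ℂ) = ∑ x : R, (if IsUnit x then (1:ℂ) else 0) := by
  rw [Finset.sum_boole]
  congr 1
  have e : Rˣ ≃ {x : R // IsUnit x} :=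
    { toFun := fun u => ⟨u, u.isUnit⟩
      invFun := fun s => s.2.unit
      left_inv := fun u => Units.ext u.isUnit.unit_spec
      right_inv := fun s => Subtype.ext s.2.unit_spec }
  rw [Nat.card_eq_fintype_card, Fintype.card_congr e, Fintype.card_subtype]

end quot

section main

lemma exp_term_one {ζ 𝔭 : O} (hζ : IsPrimitiveRoot ζ 12) (hp : Prime 𝔭) {k l : ℕ}
    (hlk : l ≤ k) (y : O) :
    Complex.exp (2 * (Real.pi : ℂ) * Complex.I *
      ((Algebra.trace ℚ (CyclotomicField 12 ℚ)
        ((y : F) * ((𝔭 ^ k : O) : F) / (((𝔭 ^ l : O) : F) * ((dO ζ : O) : F))) : ℚ) : ℂ)) = 1 := by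
  have hpF : ((𝔭 : O) : F) ≠ 0 := (map_ne_zero_iff _ RingOfIntegers.coe_injective).mpr hp.ne_zero
  have hdne := dF_ne_zero hζ
  have harg : (y : F) * ((𝔭 ^ k : O) : F) / (((𝔭 ^ l : O) : F) * ((dO ζ : O) : F))
      = ((y * 𝔭 ^ (k - l) : O) : F) / ((dO ζ : O) : F) := by
    push_cast
    rw [show ((𝔭 : O) : F) ^ k = ((𝔭 : O) : F) ^ l * ((𝔭 : O) : F) ^ (k - l) by
      rw [← pow_add]; congr 1; omega]
    field_simp
  rw [harg]
  obtain ⟨m, hm⟩ := trace_div_d hζ (y * 𝔭 ^ (k - l))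
  rw [hm, Complex.exp_eq_one_iff]
  exact ⟨m, by push_cast; ring⟩

lemma sum_eq_zero_of_equiv {α : Type*} [Fintype α] (f : α → ℂ) (c : ℂ) (hc : c ≠ 1)
    (e : α ≃ α) (h : ∀ x, f (e x) = c * f x) : ∑ x, f x = 0 := by
  have h1 : ∑ x, f x = c * ∑ x, f x := by
    calc ∑ x, f x = ∑ x, f (e x) := (Equiv.sum_comp e f).symm
      _ = ∑ x, c * f x := by simp_rw [h]
      _ = c * ∑ x, f x := by rw [Finset.mul_sum]
  have h2 : (c - 1) * ∑ x, f x = 0 := by linear_combination -h1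
  rcases mul_eq_zero.mp h2 with h' | h'
  · exact absurd (by linear_combination h') hc
  · exact h'

end main


/-- For a prime `𝔭` of `𝒪_F` coprime to 3 and `k ≥ l ≥ 0` with `3 ∣ l`, one has
`g₃(𝔭^k, 𝔭^l) = φ(𝔭^l) = #(𝒪_F/(𝔭^l))ˣ`; and if neither `l = k + 1` nor
(`k ≥ l` and `3 ∣ l`) holds, then `g₃(𝔭^k, 𝔭^l) = 0`. Here `χ` is the cubic
residue symbol modulo `𝔭` of exact order 3, and the symbol modulo `𝔭^l` is `χ^l`. -/
theorem stmt18 (ζ : 𝓞 (CyclotomicField 12 ℚ)) (hζ : IsPrimitiveRoot ζ 12)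
    (𝔭 : 𝓞 (CyclotomicField 12 ℚ)) (hp : Prime 𝔭) (h3 : IsCoprime 𝔭 3)
    (χ : 𝓞 (CyclotomicField 12 ℚ) → ℂ)
    (hmul : ∀ x y, χ (x * y) = χ x * χ y)
    (hper : ∀ x y, 𝔭 ∣ x - y → χ x = χ y)
    (hcube : ∀ x, ¬ 𝔭 ∣ x → (χ x) ^ 3 = 1)
    (hzero : ∀ x, 𝔭 ∣ x → χ x = 0)
    (hord : ∃ x, ¬ 𝔭 ∣ x ∧ χ x ≠ 1)
    (k l : ℕ) :
    ((l ≤ k ∧ l % 3 = 0) →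
      gaussSum3 (fun x => (χ x) ^ l)
          (2 * ((ζ : CyclotomicField 12 ℚ) + (ζ : CyclotomicField 12 ℚ) ^ 11)
            * (ζ : CyclotomicField 12 ℚ) ^ 3) (𝔭 ^ k) (𝔭 ^ l)
        = (Nat.card (𝓞 (CyclotomicField 12 ℚ) ⧸ Ideal.span {𝔭 ^ l})ˣ : ℂ)) ∧
    (¬ l = k + 1 → ¬ (l ≤ k ∧ l % 3 = 0) →
      gaussSum3 (fun x => (χ x) ^ l)
          (2 * ((ζ : CyclotomicField 12 ℚ) + (ζ : CyclotomicField 12 ℚ) ^ 11)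
            * (ζ : CyclotomicField 12 ℚ) ^ 3) (𝔭 ^ k) (𝔭 ^ l) = 0) := by
  classical
  have hpF : ((𝔭 : O) : F) ≠ 0 := (map_ne_zero_iff _ RingOfIntegers.coe_injective).mpr hp.ne_zero
  have hdne := dF_ne_zero hζ
  have hδ : (2 * ((ζ : F) + (ζ : F) ^ 11) * (ζ : F) ^ 3) = ((dO ζ : O) : F) :=
    (d_eq_delta hζ).symm
  letI : Fintype (O ⧸ Ideal.span {𝔭 ^ l}) :=
    @Fintype.ofFinite _ (Ideal.finiteQuotientOfFreeOfNeBot _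
      (by rw [Ne, Ideal.span_singleton_eq_bot]; exact pow_ne_zero l hp.ne_zero))
  constructor
  · rintro ⟨hlk, hl3⟩
    simp only [gaussSum3, hδ]
    rw [finsum_eq_sum_of_fintype, card_units_eq]
    apply Finset.sum_congr rfl
    intro x _
    rw [exp_term_one hζ hp hlk, mul_one]
    by_cases hl0 : l = 0
    · subst hl0
      have hxu : IsUnit x := by
        have hx1 : x = Ideal.Quotient.mk _ (1 : O) := by
          rw [← mk_out x]
          apply Ideal.Quotient.eq.mpr
          exact Ideal.mem_span_singleton.mpr ⟨Quotient.out x - 1, by simp⟩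
        rw [hx1, map_one]
        exact isUnit_one
      rw [if_pos hxu, pow_zero]
    · by_cases hdvd : 𝔭 ∣ Quotient.out x
      · rw [if_neg (fun h => ((isUnit_iff_not_dvd hp hl0 x).mp h) hdvd),
          hzero _ hdvd, zero_pow hl0]
      · rw [if_pos ((isUnit_iff_not_dvd hp hl0 x).mpr hdvd)]
        obtain ⟨t, rfl⟩ := Nat.dvd_of_mod_eq_zero hl3
        rw [pow_mul, hcube _ hdvd, one_pow]
  · intro hne hnot
    simp only [gaussSum3, hδ]
    rw [finsum_eq_sum_of_fintype]
    rcases le_or_gt l k with hlk | hlt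
    · -- l ≤ k and 3 ∤ l
      have hl3 : l % 3 ≠ 0 := fun h => hnot ⟨hlk, h⟩
      have hl0 : l ≠ 0 := fun h => hl3 (by simp [h])
      obtain ⟨u, hu, hu1⟩ := hord
      have hχ3 : χ u ^ 3 = 1 := hcube u hu
      have hχl : χ u ^ l ≠ 1 := by
        have hrep : l % 3 = 1 ∨ l % 3 = 2 := by omega
        have hdecomp : χ u ^ l = χ u ^ (l % 3) := by
          conv_lhs => rw [← Nat.div_add_mod l 3]
          rw [pow_add, pow_mul, hχ3, one_pow, one_mul]
        rcases hrep with h | h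
        · rw [hdecomp, h, pow_one]; exact hu1
        · rw [hdecomp, h]
          intro h2
          have h33 : χ u ^ 3 = χ u ^ 2 * χ u := by ring
          rw [h33, h2, one_mul] at hχ3
          exact hu1 hχ3
      set v := (isUnit_mk hp hu l).unit with hv
      have hmkvu : (v : O ⧸ Ideal.span {𝔭 ^ l}) = Ideal.Quotient.mk _ u := (isUnit_mk hp hu l).unit_spec
      refine sum_eq_zero_of_equiv _ (χ u ^ l) hχl
        { toFun := fun x => (v : O ⧸ Ideal.span {𝔭 ^ l}) * x
          invFun := fun x => ((v⁻¹ : (O ⧸ Ideal.span {𝔭 ^ l})ˣ) : O ⧸ Ideal.span {𝔭 ^ l}) * x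
          left_inv := fun x => by simp
          right_inv := fun x => by simp } ?_
      intro x
      simp only [Equiv.coe_fn_mk]
      have hdvd : 𝔭 ∣ Quotient.out ((v : O ⧸ Ideal.span {𝔭 ^ l}) * x) - u * Quotient.out x := by
        apply dvd_trans (dvd_pow_self 𝔭 hl0)
        apply dvd_sub_out
        rw [map_mul, mk_out, hmkvu]
      have hχeq : χ (Quotient.out ((v : O ⧸ Ideal.span {𝔭 ^ l}) * x)) = χ u * χ (Quotient.out x) := by
        rw [hper _ _ hdvd, hmul]
      rw [hχeq, mul_pow]
      rw [exp_term_one hζ hp hlk, exp_term_one hζ hp hlk]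
      ring
    · -- l ≥ k + 2
      have hl2 : k + 2 ≤ l := by omega
      have hl0 : l ≠ 0 := by omega
      obtain ⟨z, hz⟩ := exists_trace_nonint hζ hp
      set c₀ : O := 𝔭 ^ (l - k - 1) * z with hc₀
      set B : ℚ := Algebra.trace ℚ (CyclotomicField 12 ℚ)
        ((z : F) / (((𝔭 : O) : F) * ((dO ζ : O) : F))) with hB
      set c : ℂ := Complex.exp (2 * (Real.pi : ℂ) * Complex.I * (B : ℂ)) with hc
      have h2πI : (2 * (Real.pi : ℂ) * Complex.I) ≠ 0 := by
        simp [Real.pi_ne_zero, Complex.I_ne_zero]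
      have hcne : c ≠ 1 := by
        intro h1
        rw [hc, Complex.exp_eq_one_iff] at h1
        obtain ⟨n, hn⟩ := h1
        refine hz n ?_
        have hBn : (B : ℂ) = (n : ℂ) := by
          apply mul_left_cancel₀ h2πI
          rw [hn]; ring
        exact_mod_cast hBn
      refine sum_eq_zero_of_equiv _ c hcne (Equiv.addLeft (Ideal.Quotient.mk _ c₀)) ?_
      intro x
      simp only [Equiv.coe_addLeft]
      have hmk : Ideal.Quotient.mk (Ideal.span {𝔭 ^ l}) (c₀ + Quotient.out x)
          = Ideal.Quotient.mk (Ideal.span {𝔭 ^ l}) c₀ + x := by rw [map_add, mk_out]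
      obtain ⟨w, hw⟩ := dvd_sub_out hmk
      set y := Quotient.out (Ideal.Quotient.mk (Ideal.span {𝔭 ^ l}) c₀ + x) with hy
      have hyw : y = c₀ + Quotient.out x + 𝔭 ^ l * w := by linear_combination hw
      have hχeq : χ y = χ (Quotient.out x) := by
        apply hper
        have hsub : y - Quotient.out x = 𝔭 ^ (l - k - 1) * z + 𝔭 ^ l * w := by
          rw [hyw, hc₀]; ring
        rw [hsub]
        exact dvd_add ((dvd_pow_self 𝔭 (by omega : l - k - 1 ≠ 0)).mul_right z)
          ((dvd_pow_self 𝔭 hl0).mul_right w)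
      obtain ⟨m, hm⟩ := trace_div_d hζ (w * 𝔭 ^ k)
      have hargsplit : (y : F) * ((𝔭 ^ k : O) : F) / (((𝔭 ^ l : O) : F) * ((dO ζ : O) : F))
          = ((Quotient.out x : O) : F) * ((𝔭 ^ k : O) : F) / (((𝔭 ^ l : O) : F) * ((dO ζ : O) : F))
            + (z : F) / (((𝔭 : O) : F) * ((dO ζ : O) : F))
            + ((w * 𝔭 ^ k : O) : F) / ((dO ζ : O) : F) := by
        have hyF : (y : F) = ((𝔭 : O) : F) ^ (l - k - 1) * (z : F) + ((Quotient.out x : O) : F)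
            + ((𝔭 : O) : F) ^ l * (w : F) := by
          rw [hyw, hc₀]; push_cast; ring
        rw [hyF]
        push_cast
        have hpl : ((𝔭 : O) : F) ^ (l - k - 1) * ((𝔭 : O) : F) ^ k * ((𝔭 : O) : F)
            = ((𝔭 : O) : F) ^ l := by
          rw [← pow_add, ← pow_succ]; congr 1; omega
        field_simp [hpF, hdne]
        linear_combination ((z : O) : F) * hpl
      have htr : Algebra.trace ℚ (CyclotomicField 12 ℚ)
          ((y : F) * ((𝔭 ^ k : O) : F) / (((𝔭 ^ l : O) : F) * ((dO ζ : O) : F)))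
          = Algebra.trace ℚ (CyclotomicField 12 ℚ)
              (((Quotient.out x : O) : F) * ((𝔭 ^ k : O) : F) / (((𝔭 ^ l : O) : F) * ((dO ζ : O) : F)))
            + B + m := by
        rw [hargsplit, map_add, map_add, hm, hB]
      rw [hχeq, htr]
      push_cast
      rw [mul_add, mul_add, Complex.exp_add, Complex.exp_add]
      have hexpm : Complex.exp (2 * (Real.pi : ℂ) * Complex.I * (m : ℂ)) = 1 := by
        rw [Complex.exp_eq_one_iff]
        exact ⟨m, by ring⟩
      rw [hexpm, mul_one]
      ring
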